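/- arXiv:1909.10925 — 4 statements merged into one kernel-verified Lean document; each statement's English description precedes it below -/
import Mathlib

section
/- Let (x, p, λ) be a KKT point of the AMO Eisenberg-Gale program. Fix a buyer i and an item group k with λ_ik > 0, and suppose there is a buyer i' with |β_i − β_{i'}| ≤ ε_β and sum_{j∈k} x_{i'j} < 1 (so λ_{i'k} = 0 by complementary slackness). Let j_k ∈ k be an item with x_{i j_k} > 0 and |v_{i j_k} − v_{i' j_k}| ≤ ε_v. Then λ_{ik} ≤ ε_β · v_{i j_k} + β_{i'} · ε_v. -/
open Finset

/-- Approximate twins give bounded AMO (group-constraint) prices: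
if `lam i k > 0`, buyer `i'` has close utility price, is unconstrained in
group `k`, and item `jk ∈ k` has `x i jk > 0` with close valuations, then
`lam i k ≤ εβ * v i jk + β i' * εv`. -/
theorem stmt2 {N M Kn : ℕ} (B : Fin N → ℝ) (v : Fin N → Fin M → ℝ)
    (x : Fin N → Fin M → ℝ) (p : Fin M → ℝ) (lam : Fin N → Fin Kn → ℝ)
    (g : Fin M → Fin Kn) (beta : Fin N → ℝ)
    (hbeta : ∀ i, beta i = B i / ∑ j, v i j * x i j)
    (hB : ∀ i, 0 < B i) (hv : ∀ i j, 0 < v i j)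
    (hbpos : ∀ i, 0 < beta i)
    (hx : ∀ i j, 0 ≤ x i j)
    (hp : ∀ j, 0 ≤ p j) (hlam : ∀ i k, 0 ≤ lam i k)
    (hstat : ∀ i j, v i j * beta i ≤ p j + lam i (g j))
    (heq : ∀ i j, 0 < x i j → v i j * beta i = p j + lam i (g j))
    (i i' : Fin N) (k : Fin Kn) (εβ εv : ℝ)
    (hlik : 0 < lam i k)
    (hclose : |beta i - beta i'| ≤ εβ)
    (hunconstrained : ∑ j ∈ Finset.univ.filter (fun j => g j = k), x i' j < 1)
    (hcs : lam i' k * (1 - ∑ j ∈ Finset.univ.filter (fun j => g j = k), x i' j) = 0)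
    (jk : Fin M) (hjk : g jk = k) (hxjk : 0 < x i jk)
    (hvclose : |v i jk - v i' jk| ≤ εv) :
    lam i k ≤ εβ * v i jk + beta i' * εv := by
  have hlam0 : lam i' k = 0 := by
    rcases mul_eq_zero.1 hcs with h | h
    · exact h
    · linarith
  have h1 : v i jk * beta i = p jk + lam i k := by
    have := heq i jk hxjk; rwa [hjk] at this
  have h2 : v i' jk * beta i' ≤ p jk := by
    have := hstat i' jk; rw [hjk, hlam0] at this; linarith
  have hd1 : beta i - beta i' ≤ εβ := (abs_le.1 hclose).2
  have hd2 : v i jk - v i' jk ≤ εv := (abs_le.1 hvclose).2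
  have hv1 := (hv i jk).le
  have hb1 := (hbpos i').le
  nlinarith [mul_le_mul_of_nonneg_right hd1 hv1, mul_le_mul_of_nonneg_left hd2 hb1]
end

section
/- Let (x, p, λ) be a KKT point of the constraint-group Eisenberg-Gale program, and suppose for buyer i that λ_{i k(j)} ≤ L for every item j with x_ij > 0 (where k(j) is j's group). Then the regret of buyer i under prices p is bounded: Ū_i(p) − v_i · x_i ≤ β_i^{-1} · L · sum_j x_ij, where β_i = B_i/(v_i · x_i) and Ū_i(p) is the demand utility of buyer i at prices p with budget B_i under the group constraints. -/
open Finset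

/-- Regret bound for a buyer at a KKT point of the constraint-group
Eisenberg-Gale program: if `lam (g j) ≤ L` for every purchased item `j`, then
the buyer's regret under prices `p` (over all feasible affordable bundles `y`)
is at most `β⁻¹ * L * ∑ j, x j`. -/
theorem stmt13 {M Kn : ℕ} (B : ℝ) (v x p : Fin M → ℝ)
    (lam : Fin Kn → ℝ) (g : Fin M → Fin Kn) (beta L : ℝ)
    (hB : 0 < B) (hv : ∀ j, 0 < v j) (hx : ∀ j, 0 ≤ x j)
    (hp : ∀ j, 0 ≤ p j) (hlam : ∀ k, 0 ≤ lam k)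
    (hu : 0 < ∑ j, v j * x j)
    (hbeta : beta = B / ∑ j, v j * x j)
    (hstat : ∀ j, v j * beta ≤ p j + lam (g j))
    (heq : ∀ j, 0 < x j → v j * beta = p j + lam (g j))
    (hbudget : ∑ j, x j * (p j + lam (g j)) = B)
    (hgroup : ∀ k, ∑ j ∈ Finset.univ.filter (fun j => g j = k), x j ≤ 1)
    (hcs : ∀ k, 0 < lam k →
      ∑ j ∈ Finset.univ.filter (fun j => g j = k), x j = 1)
    (hL : ∀ j, 0 < x j → lam (g j) ≤ L) :
    ∀ y : Fin M → ℝ, (∀ j, 0 ≤ y j) →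
      (∀ k, ∑ j ∈ Finset.univ.filter (fun j => g j = k), y j ≤ 1) →
      ∑ j, p j * y j ≤ B →
      ∑ j, v j * y j - ∑ j, v j * x j ≤ beta⁻¹ * L * ∑ j, x j := by
  intro y hy hgy hby
  have hβ : 0 < beta := by rw [hbeta]; positivity
  have hβinv : 0 ≤ beta⁻¹ := by positivity
  have hBvx : beta⁻¹ * B = ∑ j, v j * x j := by
    rw [hbeta]; field_simp
  -- step 1: v·y ≤ β⁻¹ * ∑ (p+λ) y
  have h1 : ∑ j, v j * y j ≤ beta⁻¹ * ∑ j, (p j + lam (g j)) * y j := by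
    rw [Finset.mul_sum]
    refine Finset.sum_le_sum fun j _ => ?_
    have h := mul_le_mul_of_nonneg_right (hstat j) (hy j)
    calc v j * y j = beta⁻¹ * (v j * beta * y j) := by
          field_simp
      _ ≤ beta⁻¹ * ((p j + lam (g j)) * y j) :=
          mul_le_mul_of_nonneg_left h hβinv
  -- split the sum
  have h2 : ∑ j, (p j + lam (g j)) * y j
      = ∑ j, p j * y j + ∑ j, lam (g j) * y j := by
    rw [← Finset.sum_add_distrib]; congr 1; ext j; ring
  -- group sums
  have hfib : ∀ f : Fin M → ℝ,
      ∑ j, lam (g j) * f j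
        = ∑ k, lam k * ∑ j ∈ Finset.univ.filter (fun j => g j = k), f j := by
    intro f
    rw [← Finset.sum_fiberwise (Finset.univ) g (fun j => lam (g j) * f j)]
    refine Finset.sum_congr rfl fun k _ => ?_
    rw [Finset.mul_sum]
    refine Finset.sum_congr rfl fun j hj => ?_
    simp only [Finset.mem_filter] at hj
    rw [hj.2]
  -- λ·y ≤ λ·x
  have h3 : ∑ j, lam (g j) * y j ≤ ∑ j, lam (g j) * x j := by
    rw [hfib y, hfib x]
    refine Finset.sum_le_sum fun k _ => ?_
    rcases (hlam k).eq_or_lt with h | h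
    · simp [← h]
    · rw [hcs k h]
      exact mul_le_mul_of_nonneg_left (hgy k) (hlam k)
  -- λ·x ≤ L * ∑ x
  have h4 : ∑ j, lam (g j) * x j ≤ L * ∑ j, x j := by
    rw [Finset.mul_sum]
    refine Finset.sum_le_sum fun j _ => ?_
    rcases (hx j).eq_or_lt with h | h
    · simp [← h]
    · exact mul_le_mul_of_nonneg_right (hL j h) (hx j)
  have h5 : ∑ j, p j * y j + ∑ j, lam (g j) * y j ≤ B + L * ∑ j, x j := by
    linarith
  calc ∑ j, v j * y j - ∑ j, v j * x j
      ≤ beta⁻¹ * (B + L * ∑ j, x j) - ∑ j, v j * x j := by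
        rw [h2] at h1
        nlinarith [mul_le_mul_of_nonneg_left h5 hβinv]
    _ = beta⁻¹ * L * ∑ j, x j := by
        rw [mul_add, hBvx]; ring
end

section
/- In the 2-buyer, 2-item AMO market where item 1 has supply 2, item 2 has supply 1, both buyers value item 1 at 1, buyer 1 values item 2 at 1, and buyer 2 values item 2 at 100, the AMO max-Nash-welfare solution (maximizing log(x_{11} + x_{12}) + log(x_{21} + 100 x_{22}) subject to x_{11} + x_{21} ≤ 2, x_{12} + x_{22} ≤ 1, 0 ≤ x_ij ≤ 1) gives x_{11} = x_{21} = 1 and allocates strictly more of item 2 to buyer 2 than to buyer 1 (x_{22} > x_{12}), and hence buyer 1 envies buyer 2: v_1 · x_2 > v_1 · x_1. -/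
set_option maxHeartbeats 800000

/-- In the 2-buyer, 2-item AMO market (supplies 2 and 1; buyer 1 values the
items at (1,1), buyer 2 at (1,100)), the AMO max-Nash-welfare solution gives
each buyer a full unit of item 1, gives strictly more of item 2 to buyer 2,
and hence buyer 1 envies buyer 2. -/
theorem stmt15 (x : Fin 2 → Fin 2 → ℝ)
    (hbox : ∀ i j, 0 ≤ x i j ∧ x i j ≤ 1)
    (hs1 : x 0 0 + x 1 0 ≤ 2) (hs2 : x 0 1 + x 1 1 ≤ 1)
    (hu1 : 0 < x 0 0 + x 0 1) (hu2 : 0 < x 1 0 + 100 * x 1 1)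
    (hopt : ∀ y : Fin 2 → Fin 2 → ℝ,
      (∀ i j, 0 ≤ y i j ∧ y i j ≤ 1) →
      y 0 0 + y 1 0 ≤ 2 → y 0 1 + y 1 1 ≤ 1 →
      0 < y 0 0 + y 0 1 → 0 < y 1 0 + 100 * y 1 1 →
      Real.log (y 0 0 + y 0 1) + Real.log (y 1 0 + 100 * y 1 1)
        ≤ Real.log (x 0 0 + x 0 1) + Real.log (x 1 0 + 100 * x 1 1)) :
    x 0 0 = 1 ∧ x 1 0 = 1 ∧ x 0 1 < x 1 1 ∧
      x 0 0 + x 0 1 < x 1 0 + x 1 1 := by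
  set a := x 0 0 with ha'
  set b := x 0 1 with hb'
  set c := x 1 0 with hc'
  set d := x 1 1 with hd'
  obtain ⟨ha0, ha1⟩ := hbox 0 0
  obtain ⟨hb0, hb1⟩ := hbox 0 1
  obtain ⟨hc0, hc1⟩ := hbox 1 0
  obtain ⟨hd0, hd1⟩ := hbox 1 1
  have key := hopt ![![1, 1/200], ![1, 199/200]]
    (by intro i j; fin_cases i <;> fin_cases j <;> norm_num)
    (by norm_num) (by norm_num) (by norm_num) (by norm_num)
  simp only [Matrix.cons_val_zero, Matrix.cons_val_one, Matrix.head_cons,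
    Matrix.head_fin_const] at key
  have h1 : (1 : ℝ) + 1/200 = 201/200 := by norm_num
  have h2 : (1 : ℝ) + 100 * (199/200) = 201/2 := by norm_num
  rw [h1, h2] at key
  have hlog : Real.log ((201/200 : ℝ) * (201/2)) ≤ Real.log ((a + b) * (c + 100 * d)) := by
    rw [Real.log_mul (by norm_num) (by norm_num),
      Real.log_mul (ne_of_gt hu1) (ne_of_gt hu2)]
    exact key
  have hprod : (201/200 : ℝ) * (201/2) ≤ (a + b) * (c + 100 * d) :=
    (Real.log_le_log_iff (by norm_num) (by positivity)).mp hlog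
  -- upper bound chain
  have hub1 : (a + b) * (c + 100 * d) ≤ (1 + b) * (c + 100 * d) := by nlinarith
  have hub2 : (1 + b) * (c + 100 * d) ≤ (1 + b) * (1 + 100 * d) := by nlinarith
  have hub3 : (1 + b) * (1 + 100 * d) ≤ (2 - d) * (1 + 100 * d) := by nlinarith
  have hgd : (2 - d) * (1 + 100 * d) = 40401/400 - 100 * (d - 199/200)^2 := by ring
  have hsle : (d - 199/200)^2 ≤ 0 := by nlinarith
  have hd199 : d = 199/200 := by
    have := sq_eq_zero_iff.mp (le_antisymm hsle (sq_nonneg _))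
    linarith
  have hb200 : b = 1/200 := by nlinarith
  have hc1' : c = 1 := by nlinarith
  have ha1' : a = 1 := by nlinarith
  refine ⟨ha1', hc1', by rw [hb200, hd199]; norm_num, by rw [ha1', hb200, hc1', hd199]; norm_num⟩
end

section
/- For the standard Eisenberg-Gale program with linear utilities and divisible goods, if x* is an optimal solution with supply-constraint Lagrange multipliers p*, then (x*, p*) is a market equilibrium: every buyer's allocation x*_i maximizes v_i · x_i subject to p* · x_i ≤ B_i, and every item with positive price has its supply fully allocated (sum_i x*_ij = s_j whenever p*_j > 0). -/
open Finset

/-- Classical Eisenberg-Gale equivalence: if `x` is optimal for the EG program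
with supply-constraint Lagrange multipliers `p` (formalized as a saddle point
of the Lagrangian), then `(x, p)` is a market equilibrium: every buyer's
allocation maximizes their utility among affordable bundles, and every item
with positive price is fully allocated. -/
theorem stmt16 {N M : ℕ} (B : Fin N → ℝ) (v : Fin N → Fin M → ℝ)
    (s : Fin M → ℝ) (x : Fin N → Fin M → ℝ) (p : Fin M → ℝ)
    (hB : ∀ i, 0 < B i) (hv : ∀ i j, 0 < v i j) (hs : ∀ j, 0 < s j)
    (hx : ∀ i j, 0 ≤ x i j) (hfeas : ∀ j, ∑ i, x i j ≤ s j)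
    (hu : ∀ i, 0 < ∑ j, v i j * x i j)
    (hp : ∀ j, 0 ≤ p j)
    (hsaddle1 : ∀ y : Fin N → Fin M → ℝ, (∀ i j, 0 ≤ y i j) →
      (∀ i, 0 < ∑ j, v i j * y i j) →
      ∑ i, B i * Real.log (∑ j, v i j * y i j)
          - ∑ j, p j * ((∑ i, y i j) - s j)
        ≤ ∑ i, B i * Real.log (∑ j, v i j * x i j)
          - ∑ j, p j * ((∑ i, x i j) - s j))
    (hsaddle2 : ∀ q : Fin M → ℝ, (∀ j, 0 ≤ q j) →
      ∑ i, B i * Real.log (∑ j, v i j * x i j)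
          - ∑ j, p j * ((∑ i, x i j) - s j)
        ≤ ∑ i, B i * Real.log (∑ j, v i j * x i j)
          - ∑ j, q j * ((∑ i, x i j) - s j)) :
    (∀ i, ∀ y : Fin M → ℝ, (∀ j, 0 ≤ y j) → ∑ j, p j * y j ≤ B i →
      ∑ j, v i j * y j ≤ ∑ j, v i j * x i j) ∧
    (∀ j, 0 < p j → ∑ i, x i j = s j) := by
  -- Per-buyer optimality: x i maximizes B i * log(v_i · y) - p · y over y ≥ 0.
  have keyA : ∀ i (y : Fin M → ℝ), (∀ j, 0 ≤ y j) → (0 < ∑ j, v i j * y j) →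
      B i * Real.log (∑ j, v i j * y j) - ∑ j, p j * y j
        ≤ B i * Real.log (∑ j, v i j * x i j) - ∑ j, p j * x i j := by
    intro i y hy hyu
    have hpos : ∀ i' j, 0 ≤ Function.update x i y i' j := by
      intro i' j
      rcases eq_or_ne i' i with rfl | h
      · simpa using hy j
      · rw [Function.update_of_ne h]; exact hx i' j
    have hposu : ∀ i', 0 < ∑ j, v i' j * Function.update x i y i' j := by
      intro i'
      rcases eq_or_ne i' i with rfl | h
      · simpa using hyu
      · rw [Function.update_of_ne h]; exact hu i'
    have h1 := hsaddle1 (Function.update x i y) hpos hposu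
    have e1 : ∑ i', B i' * Real.log (∑ j, v i' j * Function.update x i y i' j)
        = B i * Real.log (∑ j, v i j * y j)
          + ∑ i' ∈ univ.erase i, B i' * Real.log (∑ j, v i' j * x i' j) := by
      rw [← Finset.add_sum_erase _ _ (Finset.mem_univ i)]
      congr 1
      · simp
      · exact Finset.sum_congr rfl fun i' hi' => by
          rw [Function.update_of_ne (Finset.ne_of_mem_erase hi')]
    have e1' : ∑ i', B i' * Real.log (∑ j, v i' j * x i' j)
        = B i * Real.log (∑ j, v i j * x i j)
          + ∑ i' ∈ univ.erase i, B i' * Real.log (∑ j, v i' j * x i' j) := by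
      rw [← Finset.add_sum_erase _ _ (Finset.mem_univ i)]
    have e2 : ∀ j, ∑ i', Function.update x i y i' j = ∑ i', x i' j + (y j - x i j) := by
      intro j
      rw [← Finset.add_sum_erase _ (fun i' => Function.update x i y i' j) (Finset.mem_univ i),
          ← Finset.add_sum_erase _ (fun i' => x i' j) (Finset.mem_univ i)]
      have : ∑ i' ∈ univ.erase i, Function.update x i y i' j
          = ∑ i' ∈ univ.erase i, x i' j :=
        Finset.sum_congr rfl fun i' hi' => by
          rw [Function.update_of_ne (Finset.ne_of_mem_erase hi')]
      rw [this]
      simp only [Function.update_self]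
      ring
    have e3 : ∑ j, p j * ((∑ i', Function.update x i y i' j) - s j)
        = ∑ j, p j * ((∑ i', x i' j) - s j)
          + (∑ j, p j * y j - ∑ j, p j * x i j) := by
      have : ∀ j, p j * ((∑ i', Function.update x i y i' j) - s j)
          = p j * ((∑ i', x i' j) - s j) + (p j * y j - p j * x i j) := by
        intro j; rw [e2 j]; ring
      simp_rw [this]
      rw [Finset.sum_add_distrib, Finset.sum_sub_distrib]
    rw [e1, e1', e3] at h1
    linarith
  -- KKT: B i * v i j ≤ p j * u_i
  have keyB : ∀ i j, B i * v i j ≤ p j * (∑ j', v i j' * x i j') := by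
    intro i j
    by_contra hcon
    push_neg at hcon
    set u : ℝ := ∑ j', v i j' * x i j' with hudef
    have hu' : 0 < u := hu i
    set d : ℝ := B i * v i j - p j * u with hddef
    have hd : 0 < d := by dsimp [d]; linarith
    set t : ℝ := d / (2 * p j * v i j + 1) with htdef
    have hden : 0 < 2 * p j * v i j + 1 := by
      have := mul_nonneg (mul_nonneg (by norm_num : (0:ℝ) ≤ 2) (hp j)) (hv i j).le
      linarith
    have ht : 0 < t := div_pos hd hden
    -- the perturbed bundle
    set y : Fin M → ℝ := fun j' => x i j' + if j' = j then t else 0 with hydef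
    have hy : ∀ j', 0 ≤ y j' := by
      intro j'; dsimp [y]
      split <;> [linarith [hx i j']; simpa using hx i j']
    have hyval : ∑ j', v i j' * y j' = u + v i j * t := by
      dsimp [y]
      simp_rw [mul_add, Finset.sum_add_distrib, mul_ite, mul_zero]
      rw [Finset.sum_ite_eq' univ j (fun j' => v i j' * t)]
      simp [hudef]
    have hyu : 0 < ∑ j', v i j' * y j' := by
      rw [hyval]
      have := mul_pos (hv i j) ht
      linarith
    have hpy : ∑ j', p j' * y j' = (∑ j', p j' * x i j') + p j * t := by
      dsimp [y]
      simp_rw [mul_add, Finset.sum_add_distrib, mul_ite, mul_zero]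
      rw [Finset.sum_ite_eq' univ j (fun j' => p j' * t)]
      simp
    have hA := keyA i y hy hyu
    rw [hyval, hpy] at hA
    -- log bound: log (u + v t) - log u ≥ v t / (u + v t)
    have hvt : 0 < v i j * t := mul_pos (hv i j) ht
    have hlog : Real.log u - Real.log (u + v i j * t) ≤ u / (u + v i j * t) - 1 := by
      have h := Real.log_le_sub_one_of_pos (show 0 < u / (u + v i j * t) by positivity)
      rwa [Real.log_div (ne_of_gt hu') (by positivity)] at h
    -- so B i * (v t / (u + v t)) ≤ p j * t
    have hstep : B i * (v i j * t / (u + v i j * t)) ≤ p j * t := by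
      have h2 : B i * (Real.log (u + v i j * t) - Real.log u) ≤ p j * t := by linarith
      have h3 : v i j * t / (u + v i j * t) ≤ Real.log (u + v i j * t) - Real.log u := by
        have huvt : 0 < u + v i j * t := by positivity
        have : u / (u + v i j * t) - 1 = -(v i j * t / (u + v i j * t)) := by
          field_simp
          ring
        linarith [hlog, this ▸ hlog]
      nlinarith [ (hB i).le, h3, h2]
    -- divide by t and contradict choice of t
    have huvt : 0 < u + v i j * t := by linarith
    rw [← mul_div_assoc, div_le_iff₀ huvt] at hstep
    have hteq : t * (2 * p j * v i j + 1) = d := by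
      rw [htdef, div_mul_cancel₀ _ (ne_of_gt hden)]
    have h5 : 2 * (p j * v i j * t) = d - t := by linear_combination hteq
    have h7 : B i * v i j * t = (d + p j * u) * t := by rw [hddef]; ring
    have h8 : (2 * (p j * v i j * t)) * t = (d - t) * t := by rw [h5]
    nlinarith [hstep, h7, h8, mul_pos hd ht, sq_nonneg t]
  constructor
  · -- buyer optimality
    intro i y hy hbud
    have hBi := hB i
    have h1 : ∀ j ∈ univ, v i j * y j ≤ (p j * (∑ j', v i j' * x i j') / B i) * y j := by
      intro j _
      apply mul_le_mul_of_nonneg_right _ (hy j)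
      rw [le_div_iff₀ hBi]
      linarith [keyB i j]
    calc ∑ j, v i j * y j
        ≤ ∑ j, (p j * (∑ j', v i j' * x i j') / B i) * y j := Finset.sum_le_sum h1
      _ = ((∑ j', v i j' * x i j') / B i) * ∑ j, p j * y j := by
          rw [Finset.mul_sum]; exact Finset.sum_congr rfl fun j _ => by ring
      _ ≤ ((∑ j', v i j' * x i j') / B i) * B i := by
          exact mul_le_mul_of_nonneg_left hbud (div_nonneg (le_of_lt (hu i)) hBi.le)
      _ = ∑ j', v i j' * x i j' := div_mul_cancel₀ _ (ne_of_gt hBi)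
  · -- complementary slackness
    have h0 := hsaddle2 (fun _ => 0) (fun _ => le_refl 0)
    simp only [zero_mul, Finset.sum_const_zero, sub_zero] at h0
    have hsum : 0 ≤ ∑ j, p j * ((∑ i, x i j) - s j) := by linarith
    have hterm : ∀ j ∈ (univ : Finset (Fin M)), p j * ((∑ i, x i j) - s j) ≤ 0 := fun j _ =>
      mul_nonpos_of_nonneg_of_nonpos (hp j) (sub_nonpos.mpr (hfeas j))
    have hzero : ∑ j, p j * ((∑ i, x i j) - s j) = 0 :=
      le_antisymm (Finset.sum_nonpos hterm) hsum
    intro j hpj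
    have hj := (Finset.sum_eq_zero_iff_of_nonpos hterm).mp hzero j (mem_univ j)
    rcases mul_eq_zero.mp hj with h | h
    · exact absurd h (ne_of_gt hpj)
    · linarith
end
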